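/- Let V₁, V₂ and W be finite-dimensional real vector spaces, let ⟨,⟩ be a nondegenerate symmetric bilinear form on W, and let φ: V₁ × V₂ → W be a bilinear map that is flat with respect to ⟨,⟩. If X ∈ RE(φ) and N(X) = ker φ_X, then span{φ(Z,Y) : Z ∈ V₁, Y ∈ N(X)} ⊆ φ_X(V₂) ∩ φ_X(V₂)^⊥. -/

import Mathlib

open Module LinearMap Polynomial

lemma key_rank_lemma {V₂ W : Type*}
    [AddCommGroup V₂] [Module ℝ V₂]
    [AddCommGroup W] [Module ℝ W] [FiniteDimensional ℝ W]
    (A C : V₂ →ₗ[ℝ] W) (κ : ℕ) (hA : finrank ℝ (LinearMap.range A) = κ)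
    (hle : ∀ t : ℝ, finrank ℝ (LinearMap.range (A + t • C)) ≤ κ)
    (y : V₂) (hy : A y = 0) : C y ∈ LinearMap.range A := by
  by_contra hC
  -- basis of range A indexed by Fin κ
  let b : Basis (Fin κ) ℝ (LinearMap.range A) :=
    (Module.finBasis ℝ (LinearMap.range A)).reindex (finCongr (by rw [hA]))
  have hbi : ∀ i : Fin κ, ∃ v : V₂, A v = (b i : W) := fun i => (b i).2
  choose ys hys using hbi
  -- linearly independent family spanning range A
  have hli : LinearIndependent ℝ (fun i : Fin κ => A (ys i)) := by
    have : (fun i : Fin κ => A (ys i)) = (LinearMap.range A).subtype ∘ b := by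
      funext i; simp [hys]
    rw [this]
    exact b.linearIndependent.map' _ (Submodule.ker_subtype _)
  have hspan : Submodule.span ℝ (Set.range fun i : Fin κ => A (ys i)) = LinearMap.range A := by
    have h1 : (Set.range fun i : Fin κ => A (ys i)) =
        (LinearMap.range A).subtype '' Set.range b := by
      simp only [hys]
      exact Set.range_comp _ b
    rw [h1, Submodule.span_image, b.span_eq, Submodule.map_top, Submodule.range_subtype]
  -- the snoc family
  set w : Fin (κ + 1) → W := Fin.snoc (fun i : Fin κ => A (ys i)) (C y) with hw_def
  have hw : LinearIndependent ℝ w := by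
    rw [hw_def, linearIndependent_fin_snoc]
    exact ⟨hli, by rw [hspan]; exact hC⟩
  -- dual functionals
  set S := Submodule.span ℝ (Set.range w) with hS_def
  let bS : Basis (Fin (κ + 1)) ℝ S := Basis.span hw
  obtain ⟨S', hS'⟩ := Submodule.exists_isCompl S
  let h : Fin (κ + 1) → (W →ₗ[ℝ] ℝ) := fun j =>
    (bS.coord j).comp (S.linearProjOfIsCompl S' hS')
  have hhw : ∀ j i, h j (w i) = if i = j then 1 else 0 := by
    intro j i
    have hwi : w i ∈ S := Submodule.subset_span (Set.mem_range_self i)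
    have h1 : S.linearProjOfIsCompl S' hS' (w i) = bS i := by
      rw [show w i = ((bS i : S) : W) from (congrArg Subtype.val (Basis.span_apply hw i)).symm]
      exact Submodule.linearProjOfIsCompl_apply_left hS' (bS i)
    simp only [h, LinearMap.comp_apply, h1, Basis.coord_apply, Basis.repr_self]
    exact Finsupp.single_apply
  -- the "derivative" family
  set c : Fin (κ + 1) → W := Fin.snoc (fun i : Fin κ => C (ys i)) 0 with hc_def
  -- polynomial matrix
  set N : Matrix (Fin (κ + 1)) (Fin (κ + 1)) (Polynomial ℝ) :=
    fun j i => Polynomial.C (h j (w i)) + Polynomial.X * Polynomial.C (h j (c i)) with hN_def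
  have hN0 : N.map (eval 0) = 1 := by
    ext j i
    rw [Matrix.map_apply, Matrix.one_apply]
    simp only [hN_def, eval_add, eval_mul, eval_C, eval_X, zero_mul, add_zero, hhw]
    by_cases hji : i = j
    · simp [hji]
    · rw [if_neg hji, if_neg (Ne.symm hji)]
  have hdet : N.det ≠ 0 := by
    intro hd
    have : eval 0 N.det = (1 : ℝ) := by
      rw [show eval 0 N.det = ((evalRingHom 0).mapMatrix N).det from (evalRingHom 0).map_det N]
      rw [show (evalRingHom 0).mapMatrix N = 1 from hN0, Matrix.det_one]
    rw [hd] at this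
    simp at this
  -- choose t ≠ 0 not a root
  have hfin : ({(0 : ℝ)} ∪ {x | N.det.IsRoot x}).Finite :=
    (Set.finite_singleton 0).union (finite_setOf_isRoot hdet)
  obtain ⟨t, ht⟩ := Set.Infinite.nonempty (Set.Finite.infinite_compl hfin)
  have ht0 : t ≠ 0 := fun h0 => ht (Or.inl (by simp [h0]))
  have htroot : eval t N.det ≠ 0 := fun h0 => ht (Or.inr h0)
  -- the perturbed family
  set v : Fin (κ + 1) → W := fun i => w i + t • c i with hv_def
  have hMv : ∀ j i, (N.map (evalRingHom t)) j i = h j (v i) := by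
    intro j i
    rw [Matrix.map_apply]
    simp only [hN_def, coe_evalRingHom, eval_add, eval_mul, eval_C, eval_X]
    simp only [hv_def, map_add, map_smul, smul_eq_mul]
  have hvind : LinearIndependent ℝ v := by
    rw [Fintype.linearIndependent_iff]
    intro g hg
    have hmv : (N.map (evalRingHom t)).mulVec g = 0 := by
      funext j
      have hsum : h j (∑ i, g i • v i) = 0 := by rw [hg]; simp
      simp only [map_sum, map_smul, smul_eq_mul] at hsum
      simp only [Matrix.mulVec, dotProduct, hMv, Pi.zero_apply]
      rw [← hsum]
      exact Finset.sum_congr rfl fun i _ => mul_comm _ _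
    have hdet' : (N.map (evalRingHom t)).det ≠ 0 := by
      rw [show N.map ⇑(evalRingHom t) = (evalRingHom t).mapMatrix N from rfl,
        ← (evalRingHom t).map_det N]
      simpa using htroot
    exact fun i => congrFun (Matrix.eq_zero_of_mulVec_eq_zero hdet' hmv) i
  have hvrange : ∀ i, v i ∈ LinearMap.range (A + t • C) := by
    intro i
    refine Fin.lastCases ?_ ?_ i
    · -- last : v last = C y
      refine ⟨t⁻¹ • y, ?_⟩
      simp only [hv_def, hw_def, hc_def, Fin.snoc_last, smul_zero, add_zero]
      simp only [LinearMap.add_apply, LinearMap.smul_apply, map_smul, hy, smul_zero, zero_add]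
      rw [smul_smul, inv_mul_cancel₀ ht0, one_smul]
    · intro i0
      refine ⟨ys i0, ?_⟩
      simp only [hv_def, hw_def, hc_def, Fin.snoc_castSucc]
      simp [LinearMap.add_apply]
  -- rank contradiction
  have h1 : Submodule.span ℝ (Set.range v) ≤ LinearMap.range (A + t • C) := by
    rw [Submodule.span_le]
    rintro x ⟨i, rfl⟩
    exact hvrange i
  have h2 : finrank ℝ (Submodule.span ℝ (Set.range v)) = κ + 1 := by
    rw [finrank_span_eq_card hvind, Fintype.card_fin]
  have h3 := Submodule.finrank_mono h1
  rw [h2] at h3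
  have h4 := hle t
  omega


/-- Proposition (secondst): if `φ` is flat with respect to a nondegenerate symmetric bilinear
form on `W`, `X` is a regular element of `φ` and `N(X) = ker φ_X`, then
`S(φ|_{V₁ × N(X)}) ⊆ φ_X(V₂) ∩ φ_X(V₂)^⊥`. -/
theorem stmt_3
    {V₁ V₂ W : Type*}
    [AddCommGroup V₁] [Module ℝ V₁] [FiniteDimensional ℝ V₁]
    [AddCommGroup V₂] [Module ℝ V₂] [FiniteDimensional ℝ V₂]
    [AddCommGroup W] [Module ℝ W] [FiniteDimensional ℝ W]
    (B : LinearMap.BilinForm ℝ W)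
    (hBsymm : ∀ x y, B x y = B y x)
    (hBnondeg : B.Nondegenerate)
    (φ : V₁ →ₗ[ℝ] V₂ →ₗ[ℝ] W)
    (hflat : ∀ (X Z : V₁) (Y T : V₂), B (φ X Y) (φ Z T) - B (φ X T) (φ Z Y) = 0)
    (κ : ℕ) (hκ : κ = ⨆ X : V₁, finrank ℝ (LinearMap.range (φ X)))
    (X : V₁) (hX : finrank ℝ (LinearMap.range (φ X)) = κ) :
    Submodule.span ℝ {w | ∃ Z : V₁, ∃ Y ∈ LinearMap.ker (φ X), φ Z Y = w} ≤
      LinearMap.range (φ X) ⊓ B.orthogonal (LinearMap.range (φ X)) := by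
  rw [Submodule.span_le]
  rintro w ⟨Z, Y, hY, rfl⟩
  rw [LinearMap.mem_ker] at hY
  refine Submodule.mem_inf.mpr ⟨?_, ?_⟩
  · -- range part
    refine key_rank_lemma (φ X) (φ Z) κ hX ?_ Y hY
    intro t
    have hφ : φ X + t • φ Z = φ (X + t • Z) := by
      rw [map_add, map_smul]
    rw [hφ, hκ]
    have hbdd : BddAbove (Set.range fun X' : V₁ => finrank ℝ (LinearMap.range (φ X'))) := by
      refine ⟨finrank ℝ W, ?_⟩
      rintro n ⟨X', rfl⟩
      exact Submodule.finrank_le _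
    exact le_ciSup hbdd (X + t • Z)
  · -- orthogonal part
    rw [LinearMap.BilinForm.mem_orthogonal_iff]
    rintro n ⟨T, rfl⟩
    have := hflat X Z Y T
    rw [hY] at this
    simp only [map_zero, LinearMap.zero_apply, zero_sub, neg_eq_zero] at this
    exact this
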